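/- Every nested set of bonds of a finite connected graph G is the set of fundamental cuts of some tree-cut decomposition of G. -/

import Mathlib

open SimpleGraph

variable {V : Type*}

/-- The cut induced by a side `A`: edges of `G` with one endpoint in `A` and one outside. -/
def cutEdges (G : SimpleGraph V) (A : Set V) : Set (Sym2 V) :=
  {e | ∃ u v, e = s(u, v) ∧ G.Adj u v ∧ u ∈ A ∧ v ∉ A}

/-- A cut-separation, given by a side `A`: both sides nonempty. -/
def IsCutSep (_G : SimpleGraph V) (A : Set V) : Prop :=
  A.Nonempty ∧ Aᶜ.Nonempty

/-- A bond-separation: a cut-separation both of whose sides induce connected subgraphs. -/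
def IsBondSep (G : SimpleGraph V) (A : Set V) : Prop :=
  A.Nonempty ∧ Aᶜ.Nonempty ∧ (G.induce A).Connected ∧ (G.induce Aᶜ).Connected

/-- Two separations (given by sides) are nested. -/
def Nested (A C : Set V) : Prop :=
  A ⊆ C ∨ A ⊆ Cᶜ ∨ Aᶜ ⊆ C ∨ Aᶜ ⊆ Cᶜ

/-- Two separations cross if they are not nested. -/
def Crosses (A C : Set V) : Prop := ¬ Nested A C

/-- `u` and `v` are (<k)-inseparable: no edge set of size < k separates them. -/
def Insep (G : SimpleGraph V) (k : ℕ) (u v : V) : Prop :=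
  ∀ F : Set (Sym2 V), F.Finite → F.ncard < k → (G.deleteEdges F).Reachable u v

/-- A k-edge-block: an equivalence class of (<k)-inseparability. -/
def IsEdgeBlock (G : SimpleGraph V) (k : ℕ) (B : Set V) : Prop :=
  ∃ v, B = {w | Insep G k v w}

/-- The edge set `F` separates `B₁` from `B₂` in `G`. -/
def SepSets (G : SimpleGraph V) (B₁ B₂ : Set V) (F : Set (Sym2 V)) : Prop :=
  ∀ u ∈ B₁, ∀ v ∈ B₂, ¬ (G.deleteEdges F).Reachable u v

/-- The minimum size of an edge set separating `B₁` from `B₂`. -/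
noncomputable def sepOrder (G : SimpleGraph V) (B₁ B₂ : Set V) : ℕ :=
  sInf {n | ∃ F : Set (Sym2 V), F.Finite ∧ F.ncard = n ∧ SepSets G B₁ B₂ F}

namespace Stmt12Aux

lemma cutEdges_compl (G : SimpleGraph V) (A : Set V) : cutEdges G Aᶜ = cutEdges G A := by
  ext e
  constructor
  · rintro ⟨u, v, rfl, h, hu, hv⟩
    exact ⟨v, u, Sym2.eq_swap, h.symm, by simpa using hv, by simpa using hu⟩
  · rintro ⟨u, v, rfl, h, hu, hv⟩
    exact ⟨v, u, Sym2.eq_swap, h.symm, by simpa using hv, by simpa using hu⟩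

lemma ne_compl_self {A : Set V} (hA : A.Nonempty) : A ≠ Aᶜ := by
  rintro h
  obtain ⟨a, ha⟩ := hA
  exact (h ▸ ha) ha

lemma not_compl_subset {A : Set V} (h : Aᶜ.Nonempty) : ¬ Aᶜ ⊆ A := by
  intro hsub
  obtain ⟨a, ha⟩ := h
  exact ha (hsub ha)

/-- A consistent orientation of the nested family `N`. -/
def Consis (N : Set (Set V)) (O : Set (Set V)) : Prop :=
  O ⊆ N ∧ (∀ B ∈ N, (B ∈ O ↔ Bᶜ ∉ O)) ∧ (∀ B ∈ O, ∀ C ∈ N, B ⊆ C → C ∈ O)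

/-- The type of consistent orientations. -/
abbrev Tau (N : Set (Set V)) := {O : Set (Set V) // Consis N O}

/-- Edge data: `t₂` is obtained from `t₁` by flipping the pair `{A, Aᶜ}`. -/
def EdgeAt (N : Set (Set V)) (t₁ t₂ : Tau N) (A : Set V) : Prop :=
  A ∈ t₁.val ∧ A ∉ t₂.val ∧ Aᶜ ∈ t₂.val ∧ Aᶜ ∉ t₁.val ∧
    ∀ B, B ≠ A → B ≠ Aᶜ → (B ∈ t₁.val ↔ B ∈ t₂.val)

/-- The structure tree: orientations adjacent iff they differ by one flip. -/
def OG (N : Set (Set V)) : SimpleGraph (Tau N) where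
  Adj t₁ t₂ := ∃ A, EdgeAt N t₁ t₂ A
  symm := by
    constructor
    rintro O O' ⟨A, p1, p2, p3, p4, p5⟩
    exact ⟨Aᶜ, p3, p4, by simpa using p1, by simpa using p2,
      fun B hB1 hB2 => (p5 B (by simpa using hB2) hB1).symm⟩
  loopless := by
    constructor
    rintro O ⟨A, p1, p2, _⟩
    exact p2 p1

def flipSet (O : Set (Set V)) (A : Set V) : Set (Set V) := insert Aᶜ (O \ {A})

lemma Ac_mem_flip (O : Set (Set V)) (A : Set V) : Aᶜ ∈ flipSet O A := Set.mem_insert _ _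

lemma A_notmem_flip {O : Set (Set V)} {A : Set V} (hne : A ≠ Aᶜ) : A ∉ flipSet O A := by
  simp [flipSet, hne]

lemma mem_flip_iff {O : Set (Set V)} {A B : Set V} (hBA : B ≠ A) (hBAc : B ≠ Aᶜ) :
    B ∈ flipSet O A ↔ B ∈ O := by
  simp [flipSet, hBA, hBAc]

section Core

variable {N : Set (Set V)}
variable (h1 : ∀ A ∈ N, A.Nonempty) (h2 : ∀ A ∈ N, Aᶜ ∈ N)
variable (h3 : ∀ A ∈ N, ∀ B ∈ N, A ⊆ B ∨ B ⊆ A ∨ A ⊆ Bᶜ ∨ Bᶜ ⊆ A)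

set_option linter.unusedSectionVars false
set_option linter.unusedVariables false
include h1 h2 h3

lemma consis_flip {O A} (hO : Consis N O) (hAO : A ∈ O)
    (hmin : ∀ C ∈ O, C ⊆ A → C = A) : Consis N (flipSet O A) := by
  have hAN : A ∈ N := hO.1 hAO
  have hAcne : Aᶜ.Nonempty := h1 Aᶜ (h2 A hAN)
  have hne : A ≠ Aᶜ := ne_compl_self (h1 A hAN)
  refine ⟨?_, ?_, ?_⟩
  · intro B hB
    rcases Set.mem_insert_iff.mp hB with rfl | hB2
    · exact h2 A hAN
    · exact hO.1 hB2.1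
  · intro B hBN
    by_cases hBA : B = A
    · subst hBA
      exact iff_of_false (A_notmem_flip hne) (fun h => h (Ac_mem_flip _ _))
    · by_cases hBAc : B = Aᶜ
      · subst hBAc
        refine iff_of_true (Ac_mem_flip _ _) ?_
        rw [compl_compl]
        exact A_notmem_flip hne
      · have hBcA : Bᶜ ≠ A := fun h => hBAc (by rw [← compl_compl B, h])
        have hBcAc : Bᶜ ≠ Aᶜ := fun h => hBA (compl_injective h)
        rw [mem_flip_iff hBA hBAc, mem_flip_iff hBcA hBcAc]
        exact hO.2.1 B hBN
  · intro B hB C hCN hBC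
    by_cases hCAc : C = Aᶜ
    · subst hCAc; exact Ac_mem_flip _ _
    · by_cases hCA : C = A
      · subst hCA
        exfalso
        rcases Set.mem_insert_iff.mp hB with rfl | hB2
        · exact not_compl_subset hAcne hBC
        · exact hB2.2 (hmin B hB2.1 hBC)
      · have hC : C ∈ O := by
          rcases Set.mem_insert_iff.mp hB with rfl | hB2
          · by_contra h
            have hCc : Cᶜ ∈ O := by
              by_contra h2'
              exact h ((hO.2.1 C hCN).mpr h2')
            have hsub : Cᶜ ⊆ A := Set.compl_subset_comm.mp hBC
            exact hCAc (by rw [← compl_compl C, hmin Cᶜ hCc hsub])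
          · exact hO.2.2 B hB2.1 C hCN hBC
        exact Set.mem_insert_iff.mpr (Or.inr ⟨hC, hCA⟩)

lemma flip_edgeAt {O A} (hO : Consis N O) (hAO : A ∈ O)
    (hmin : ∀ C ∈ O, C ⊆ A → C = A) :
    EdgeAt N ⟨O, hO⟩ ⟨flipSet O A, consis_flip h1 h2 h3 hO hAO hmin⟩ A := by
  have hAN : A ∈ N := hO.1 hAO
  have hne : A ≠ Aᶜ := ne_compl_self (h1 A hAN)
  exact ⟨hAO, A_notmem_flip hne, Ac_mem_flip _ _, (hO.2.1 A hAN).mp hAO,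
    fun B hBA hBAc => (mem_flip_iff hBA hBAc).symm⟩

lemma minimal_of_edgeAt {t₁ t₂ : Tau N} {A} (hE : EdgeAt N t₁ t₂ A) :
    ∀ C ∈ t₁.val, C ⊆ A → C = A := by
  intro C hC hCA
  by_contra hne2
  have hAN : A ∈ N := t₁.prop.1 hE.1
  have hCAc : C ≠ Aᶜ := by
    rintro rfl
    exact not_compl_subset (h1 Aᶜ (h2 A hAN)) hCA
  have hCt₂ : C ∈ t₂.val := (hE.2.2.2.2 C hne2 hCAc).mp hC
  exact hE.2.1 (t₂.prop.2.2 C hCt₂ A hAN hCA)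

lemma edgeAt_flip_eq {t₁ t₂ : Tau N} {A} (hE : EdgeAt N t₁ t₂ A) :
    t₂.val = flipSet t₁.val A := by
  have hAN : A ∈ N := t₁.prop.1 hE.1
  have hne : A ≠ Aᶜ := ne_compl_self (h1 A hAN)
  ext B
  by_cases hBA : B = A
  · subst hBA; exact iff_of_false hE.2.1 (A_notmem_flip hne)
  · by_cases hBAc : B = Aᶜ
    · subst hBAc; exact iff_of_true hE.2.2.1 (Ac_mem_flip _ _)
    · rw [mem_flip_iff hBA hBAc]
      exact (hE.2.2.2.2 B hBA hBAc).symm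

lemma uniq_min {O P : Set (Set V)} {A} (hO : Consis N O) (hP : Consis N P)
    (hAO : A ∈ O) (hAP : A ∈ P)
    (hminO : ∀ C ∈ O, C ⊆ A → C = A) (hminP : ∀ C ∈ P, C ⊆ A → C = A) : O = P := by
  have key : ∀ (O P : Set (Set V)), Consis N O → Consis N P → A ∈ O → A ∈ P →
      (∀ C ∈ O, C ⊆ A → C = A) → (∀ C ∈ P, C ⊆ A → C = A) → O ⊆ P := by
    intro O P hO hP hAO hAP hminO hminP B hBO
    by_contra hBP
    have hBN : B ∈ N := hO.1 hBO
    have hAN : A ∈ N := hO.1 hAO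
    have hBcP : Bᶜ ∈ P := by
      by_contra h; exact hBP ((hP.2.1 B hBN).mpr h)
    rcases h3 B hBN A hAN with hc | hc | hc | hc
    · exact hBP ((hminO B hBO hc) ▸ hAP)
    · exact hBP (hP.2.2 A hAP B hBN hc)
    · have : Bᶜ ∈ O := hO.2.2 A hAO Bᶜ (h2 B hBN) (Set.subset_compl_comm.mp hc)
      exact ((hO.2.1 B hBN).mp hBO) this
    · have h4 : Bᶜ ⊆ A := Set.compl_subset_comm.mp hc
      have hBcA : Bᶜ = A := hminP Bᶜ hBcP h4
      have : Aᶜ ∈ O := by rw [← hBcA, compl_compl]; exact hBO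
      exact ((hO.2.1 A hAN).mp hAO) this
  exact Set.Subset.antisymm (key O P hO hP hAO hAP hminO hminP)
    (key P O hP hO hAP hAO hminP hminO)

/-- The orientation in which `A` is the minimal element: everything pointing "towards" `A`. -/
def OASet (N : Set (Set V)) (A : Set V) : Set (Set V) :=
  {B | B ∈ N ∧ (A ⊆ B ∨ (Bᶜ ⊆ A ∧ Bᶜ ≠ A))}

lemma exists_OA {A} (hAN : A ∈ N) :
    ∃ hc : Consis N (OASet N A), A ∈ OASet N A ∧ ∀ C ∈ OASet N A, C ⊆ A → C = A := by
  have hAne := h1 A hAN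
  have hAcne := h1 Aᶜ (h2 A hAN)
  have hmem : A ∈ OASet N A := ⟨hAN, Or.inl (subset_refl A)⟩
  have hmin : ∀ C ∈ OASet N A, C ⊆ A → C = A := by
    rintro C ⟨hCN, hc | ⟨hc1, hc2⟩⟩ hCA
    · exact Set.Subset.antisymm hCA hc
    · exfalso
      obtain ⟨a, ha⟩ := hAcne
      rcases Classical.em (a ∈ C) with h | h
      · exact ha (hCA h)
      · exact ha (hc1 h)
  refine ⟨⟨fun B hB => hB.1, ?_, ?_⟩, hmem, hmin⟩
  · intro B hBN
    have hBcN := h2 B hBN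
    constructor
    · rintro ⟨-, hB⟩ ⟨-, hBc⟩
      rw [compl_compl] at hBc
      obtain ⟨a, ha⟩ := hAne
      obtain ⟨b, hb⟩ := hAcne
      rcases hB with hB | ⟨hB1, hB2⟩ <;> rcases hBc with hBc | ⟨hBc1, hBc2⟩
      · exact (hBc ha) (hB ha)
      · exact hBc2 (Set.Subset.antisymm hBc1 hB)
      · exact hB2 (Set.Subset.antisymm hB1 hBc)
      · rcases Classical.em (b ∈ B) with h | h
        · exact hb (hBc1 h)
        · exact hb (hB1 h)
    · intro hnot
      refine ⟨hBN, ?_⟩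
      rcases h3 A hAN B hBN with hc | hc | hc | hc
      · exact Or.inl hc
      · by_cases he : B = A
        · exact Or.inl (by rw [he])
        · exact absurd (⟨hBcN, Or.inr ⟨by rw [compl_compl]; exact hc,
            by rw [compl_compl]; exact he⟩⟩ : Bᶜ ∈ OASet N A) hnot
      · exact absurd (⟨hBcN, Or.inl hc⟩ : Bᶜ ∈ OASet N A) hnot
      · by_cases he : Bᶜ = A
        · exact absurd (show Bᶜ ∈ OASet N A by rw [he]; exact hmem) hnot
        · exact Or.inr ⟨hc, he⟩
  · rintro B ⟨hBN, hB2⟩ C hCN hBC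
    refine ⟨hCN, ?_⟩
    rcases hB2 with hc | ⟨hc1, hc2⟩
    · exact Or.inl (hc.trans hBC)
    · refine Or.inr ⟨(Set.compl_subset_compl.mpr hBC).trans hc1, ?_⟩
      intro he
      apply hc2
      apply Set.Subset.antisymm hc1
      rw [← he]
      exact Set.compl_subset_compl.mpr hBC

def OvSet (N : Set (Set V)) (v : V) : Set (Set V) := {B | B ∈ N ∧ v ∈ B}

lemma consis_Ov (v : V) : Consis N (OvSet N v) := by
  refine ⟨fun B hB => hB.1, ?_, ?_⟩
  · intro B hBN
    constructor
    · rintro ⟨-, hv⟩ ⟨-, hv'⟩; exact hv' hv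
    · intro h
      refine ⟨hBN, ?_⟩
      by_contra hv
      exact h ⟨h2 B hBN, hv⟩
  · rintro B ⟨hBN, hv⟩ C hCN hBC
    exact ⟨hCN, hBC hv⟩

def XO (N : Set (Set V)) (t : Tau N) : Set V := {v | t.val = OvSet N v}

lemma reach_del [Fintype V] (E : Set (Sym2 (Tau N))) :
    ∀ (n : ℕ) (O O' : Tau N), (O.val \ O'.val).ncard = n →
      (∀ P Q : Tau N, s(P, Q) ∈ E → ∀ A, A ∈ P.val → A ∉ Q.val → (A ∈ O.val ↔ A ∈ O'.val)) →
      ((OG N).deleteEdges E).Reachable O O' := by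
  intro n
  induction n using Nat.strong_induction_on with
  | _ n ih =>
    intro O O' hn hE
    rcases Set.eq_empty_or_nonempty (O.val \ O'.val) with hemp | hne
    · have h0 : O.val = O'.val := by
        apply Set.Subset.antisymm (Set.diff_eq_empty.mp hemp)
        intro B hB
        by_contra hBO
        have hBN : B ∈ N := O'.prop.1 hB
        have hBc : Bᶜ ∈ O.val := by
          by_contra h
          exact hBO ((O.prop.2.1 B hBN).mpr h)
        have hBc' : Bᶜ ∈ O'.val := Set.diff_eq_empty.mp hemp hBc
        exact ((O'.prop.2.1 B hBN).mp hB) hBc'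
      obtain rfl : O = O' := Subtype.ext h0
      exact Reachable.refl _
    · obtain ⟨A, hA, hminc⟩ := Set.exists_min_image (O.val \ O'.val) Set.ncard (Set.toFinite _) hne
      have hAO : A ∈ O.val := hA.1
      have hAO' : A ∉ O'.val := hA.2
      have hAN : A ∈ N := O.prop.1 hAO
      have hmin : ∀ C ∈ O.val, C ⊆ A → C = A := by
        intro C hC hCA
        by_contra hne2
        by_cases hC' : C ∈ O'.val
        · exact hAO' (O'.prop.2.2 C hC' A hAN hCA)
        · have hlt := Set.ncard_lt_ncard (Set.ssubset_iff_subset_ne.mpr ⟨hCA, hne2⟩)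
            (Set.toFinite A)
          exact absurd (hminc C ⟨hC, hC'⟩) (not_le.mpr hlt)
      have hAcO' : Aᶜ ∈ O'.val := by
        by_contra h
        exact hAO' ((O'.prop.2.1 A hAN).mpr h)
      set O'' : Tau N := ⟨flipSet O.val A, consis_flip h1 h2 h3 O.prop hAO hmin⟩ with hO''
      have hE2 : EdgeAt N O O'' A := flip_edgeAt h1 h2 h3 O.prop hAO hmin
      have hstep : ((OG N).deleteEdges E).Adj O O'' := by
        rw [SimpleGraph.deleteEdges_adj]
        refine ⟨⟨A, hE2⟩, fun hmem => ?_⟩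
        exact hAO' ((hE O O'' hmem A hAO hE2.2.1).mp hAO)
      have hset : O''.val \ O'.val = (O.val \ O'.val) \ {A} := by
        ext B
        constructor
        · rintro ⟨hB1, hB2⟩
          rcases Set.mem_insert_iff.mp hB1 with rfl | hB3
          · exact absurd hAcO' hB2
          · exact ⟨⟨hB3.1, hB2⟩, hB3.2⟩
        · rintro ⟨⟨hB1, hB2⟩, hB3⟩
          exact ⟨Set.mem_insert_iff.mpr (Or.inr ⟨hB1, hB3⟩), hB2⟩
      have hcard : (O''.val \ O'.val).ncard < n := by
        rw [hset, ← hn]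
        exact Set.ncard_lt_ncard (Set.sdiff_singleton_ssubset.mpr ⟨hAO, hAO'⟩) (Set.toFinite _)
      have hE' : ∀ P Q : Tau N, s(P, Q) ∈ E → ∀ A', A' ∈ P.val → A' ∉ Q.val →
          (A' ∈ O''.val ↔ A' ∈ O'.val) := by
        intro P Q hm A' hP hQ
        have horig := hE P Q hm A' hP hQ
        by_cases h4 : A' = A
        · subst h4
          exact absurd (horig.mp hAO) hAO'
        · by_cases h5 : A' = Aᶜ
          · subst h5
            exact iff_of_true (Ac_mem_flip _ _) hAcO'
          · have : A' ∈ O''.val ↔ A' ∈ O.val := mem_flip_iff h4 h5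
            rw [this]
            exact horig
      exact hstep.reachable.trans (ih _ hcard O'' O' rfl hE')

lemma camp_sep {t₁ t₂ : Tau N} {A} (hE : EdgeAt N t₁ t₂ A)
    {P Q : Tau N} (hP : A ∈ P.val) (hQ : A ∉ Q.val) :
    ¬ ((OG N).deleteEdges {s(t₁, t₂)}).Reachable P Q := by
  have main : ∀ (P Q : Tau N) (w : ((OG N).deleteEdges {s(t₁, t₂)}).Walk P Q),
      A ∈ P.val → A ∉ Q.val → False := by
    intro P Q w
    induction w with
    | nil => intro h h'; exact h' h
    | @cons P' R Q' hadj w ih =>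
      intro hP' hQ'
      by_cases hR : A ∈ R.val
      · exact ih hR hQ'
      · rw [SimpleGraph.deleteEdges_adj] at hadj
        obtain ⟨⟨B, hB1, hB2, hB3, hB4, hB5⟩, hnotmem⟩ := hadj
        have hAB : A = B := by
          by_contra hne2
          by_cases hAc : A = Bᶜ
          · rw [hAc] at hP'
            exact hB4 hP'
          · exact hR ((hB5 A hne2 hAc).mp hP')
        subst hAB
        have hEPR : EdgeAt N P' R A := ⟨hB1, hB2, hB3, hB4, hB5⟩
        have hPeq : P'.val = t₁.val :=
          uniq_min h1 h2 h3 P'.prop t₁.prop hB1 hE.1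
            (minimal_of_edgeAt h1 h2 h3 hEPR) (minimal_of_edgeAt h1 h2 h3 hE)
        have hPt : P' = t₁ := Subtype.ext hPeq
        have hRt : R = t₂ := by
          apply Subtype.ext
          rw [edgeAt_flip_eq h1 h2 h3 hEPR, edgeAt_flip_eq h1 h2 h3 hE, hPeq]
        apply hnotmem
        rw [hPt, hRt]
        rfl
  intro hreach
  obtain ⟨w⟩ := hreach
  exact main P Q w hP hQ

end Core

lemma reach_del_comap {α β : Type*} (e : α ≃ β) (H : SimpleGraph α) (x y : α) (P Q : α) :
    ((H.comap (e.symm : β → α)).deleteEdges {s(e x, e y)}).Reachable (e P) (e Q) ↔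
      (H.deleteEdges {s(x, y)}).Reachable P Q := by
  constructor
  · intro h
    let f : (H.comap (e.symm : β → α)).deleteEdges {s(e x, e y)} →g H.deleteEdges {s(x, y)} :=
      { toFun := e.symm
        map_rel' := by
          intro a b hab
          rw [SimpleGraph.deleteEdges_adj] at hab ⊢
          refine ⟨hab.1, fun hc => hab.2 ?_⟩
          rw [Set.mem_singleton_iff] at hc ⊢
          have := congrArg (Sym2.map e) hc
          simpa [Sym2.map_pair_eq] using this }
    have hmap := h.map f
    have hcoe : ⇑f = ⇑e.symm := rfl
    simp only [hcoe, Equiv.symm_apply_apply] at hmap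
    exact hmap
  · intro h
    let f : H.deleteEdges {s(x, y)} →g (H.comap (e.symm : β → α)).deleteEdges {s(e x, e y)} :=
      { toFun := e
        map_rel' := by
          intro a b hab
          rw [SimpleGraph.deleteEdges_adj] at hab ⊢
          constructor
          · show H.Adj (e.symm (e a)) (e.symm (e b))
            simpa using hab.1
          · intro hc
            apply hab.2
            rw [Set.mem_singleton_iff] at hc ⊢
            have := congrArg (Sym2.map (e.symm : β → α)) hc
            simpa [Sym2.map_pair_eq] using this }
    have hmap := h.map f
    have hcoe : ⇑f = ⇑e := rfl
    simpa only [hcoe] using hmap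

end Stmt12Aux

open Stmt12Aux in
/-- Theorem 4.3 (finite case): every nested set of bonds of a finite connected graph
is the set of fundamental cuts of some tree-cut decomposition. -/
theorem stmt_12 [Fintype V] (G : SimpleGraph V) (hG : G.Connected)
    (M : Set (Set V)) (hM : ∀ A ∈ M, IsBondSep G A)
    (hnested : ∀ A ∈ M, ∀ C ∈ M, Nested A C) :
    ∃ (τ : Type) (_ : Fintype τ) (T : SimpleGraph τ) (X : τ → Set V),
      T.Connected ∧ T.IsAcyclic ∧
      -- near-partition of V(G)
      (⋃ t, X t) = Set.univ ∧ (Pairwise fun s t => Disjoint (X s) (X t)) ∧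
      -- nodes with nonempty parts are dense in T
      (∀ ⦃t₁ t₂⦄, T.Adj t₁ t₂ → ∃ (s₁ s₂ : τ) (p : T.Walk s₁ s₂),
        (X s₁).Nonempty ∧ (X s₂).Nonempty ∧ p.IsPath ∧ s(t₁, t₂) ∈ p.edges) ∧
      -- the fundamental cuts are exactly the bonds in M
      {F | ∃ t₁ t₂, T.Adj t₁ t₂ ∧
        F = cutEdges G (⋃ t ∈ {t | (T.deleteEdges {s(t₁, t₂)}).Reachable t₁ t}, X t)}
        = {F | ∃ A ∈ M, F = cutEdges G A} := by
  classical
  let N : Set (Set V) := {A : Set V | A ∈ M ∨ Aᶜ ∈ M}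
  have h1 : ∀ A ∈ N, A.Nonempty := by
    rintro A (hA | hA)
    · exact (hM A hA).1
    · have := (hM Aᶜ hA).2.1
      rwa [compl_compl] at this
  have h2 : ∀ A ∈ N, Aᶜ ∈ N := by
    rintro A (hA | hA)
    · exact Or.inr (by rw [compl_compl]; exact hA)
    · exact Or.inl hA
  have hconv : ∀ {A B : Set V}, Nested A B → (A ⊆ B ∨ B ⊆ A ∨ A ⊆ Bᶜ ∨ Bᶜ ⊆ A) := by
    rintro A B (h | h | h | h)
    · exact Or.inl h
    · exact Or.inr (Or.inr (Or.inl h))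
    · exact Or.inr (Or.inr (Or.inr (Set.compl_subset_comm.mp h)))
    · exact Or.inr (Or.inl (Set.compl_subset_compl.mp h))
  have h3 : ∀ A ∈ N, ∀ B ∈ N, A ⊆ B ∨ B ⊆ A ∨ A ⊆ Bᶜ ∨ Bᶜ ⊆ A := by
    rintro A (hA | hA) B (hB | hB)
    · exact hconv (hnested A hA B hB)
    · have := hconv (hnested A hA Bᶜ hB)
      rw [compl_compl] at this
      tauto
    · have := hconv (hnested Aᶜ hA B hB)
      rcases this with h | h | h | h
      · exact Or.inr (Or.inr (Or.inr (Set.compl_subset_comm.mp h)))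
      · exact Or.inr (Or.inr (Or.inl (Set.subset_compl_comm.mp h)))
      · exact Or.inr (Or.inl (Set.compl_subset_compl.mp h))
      · exact Or.inl (Set.compl_subset_compl.mp h)
    · have := hconv (hnested Aᶜ hA Bᶜ hB)
      rw [compl_compl] at this
      rcases this with h | h | h | h
      · exact Or.inr (Or.inl (Set.compl_subset_compl.mp h))
      · exact Or.inl (Set.compl_subset_compl.mp h)
      · exact Or.inr (Or.inr (Or.inr (Set.compl_subset_comm.mp h)))
      · exact Or.inr (Or.inr (Or.inl (Set.subset_compl_comm.mp h)))
  obtain ⟨v₀⟩ := hG.nonempty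
  haveI hfin : Fintype (Tau N) := Fintype.ofFinite _
  let k := Fintype.card (Tau N)
  let e : Tau N ≃ Fin k := Fintype.equivFin _
  haveI : Nonempty (Fin k) := ⟨e ⟨OvSet N v₀, consis_Ov h1 h2 h3 v₀⟩⟩
  let T0 : SimpleGraph (Fin k) := (OG N).comap (e.symm : Fin k → Tau N)
  let X0 : Fin k → Set V := fun i => XO N (e.symm i)
  -- connectivity
  have hpre0 : T0.Preconnected := by
    intro i j
    have hr : ((OG N).deleteEdges ∅).Reachable (e.symm i) (e.symm j) :=
      reach_del h1 h2 h3 ∅ _ _ _ rfl (by simp)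
    have hr2 : (OG N).Reachable (e.symm i) (e.symm j) := by simpa using hr
    let f : OG N →g T0 :=
      { toFun := e
        map_rel' := by
          intro a b hab
          show (OG N).Adj (e.symm (e a)) (e.symm (e b))
          simpa using hab }
    have hmap := hr2.map f
    have hcoe : ⇑f = ⇑e := rfl
    simpa only [hcoe, Equiv.apply_symm_apply] using hmap
  -- acyclicity
  have hac0 : T0.IsAcyclic := by
    have hacyc : (OG N).IsAcyclic := by
      rw [isAcyclic_iff_forall_adj_isBridge]
      intro P Q hadj
      obtain ⟨A, hE⟩ := hadj
      rw [SimpleGraph.isBridge_iff]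
      show ¬((OG N).deleteEdges {s(P, Q)}).Reachable P Q
      exact camp_sep h1 h2 h3 hE hE.1 hE.2.1
    intro i c hc
    let f : T0 →g OG N := { toFun := e.symm, map_rel' := fun hab => hab }
    have hinj : Function.Injective ⇑f := e.symm.injective
    exact hacyc (c.map f) ((Walk.map_isCycle_iff_of_injective hinj).mpr hc)
  -- near-partition
  have hU : (⋃ i, X0 i) = Set.univ := by
    ext v
    simp only [Set.mem_iUnion, Set.mem_univ, iff_true]
    refine ⟨e ⟨OvSet N v, consis_Ov h1 h2 h3 v⟩, ?_⟩
    show (e.symm (e (⟨OvSet N v, consis_Ov h1 h2 h3 v⟩ : Tau N))).val = OvSet N v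
    rw [Equiv.symm_apply_apply]
  have hD : Pairwise fun s t => Disjoint (X0 s) (X0 t) := by
    intro i j hij
    rw [Set.disjoint_left]
    intro v hvi hvj
    have hv1 : (e.symm i).val = OvSet N v := hvi
    have hv2 : (e.symm j).val = OvSet N v := hvj
    exact hij (e.symm.injective (Subtype.ext (hv1.trans hv2.symm)))
  -- density
  have hDen : ∀ ⦃i j⦄, T0.Adj i j → ∃ (s₁ s₂ : Fin k) (p : T0.Walk s₁ s₂),
      (X0 s₁).Nonempty ∧ (X0 s₂).Nonempty ∧ p.IsPath ∧ s(i, j) ∈ p.edges := by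
    intro i j hadj
    obtain ⟨A, hE⟩ := (hadj : (OG N).Adj (e.symm i) (e.symm j))
    have hAN : A ∈ N := (e.symm i).prop.1 hE.1
    obtain ⟨u, hu⟩ := h1 A hAN
    obtain ⟨w, hw⟩ := h1 Aᶜ (h2 A hAN)
    let s₁ : Tau N := ⟨OvSet N u, consis_Ov h1 h2 h3 u⟩
    let s₂ : Tau N := ⟨OvSet N w, consis_Ov h1 h2 h3 w⟩
    obtain ⟨w0⟩ := hpre0 (e s₁) (e s₂)
    let p := w0.toPath
    refine ⟨e s₁, e s₂, p.val, ⟨u, ?_⟩, ⟨w, ?_⟩, p.prop, ?_⟩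
    · show (e.symm (e s₁)).val = OvSet N u
      rw [Equiv.symm_apply_apply]
    · show (e.symm (e s₂)).val = OvSet N w
      rw [Equiv.symm_apply_apply]
    · by_contra hmem
      have hp : ∀ e' ∈ p.val.edges, e' ∉ ({s(i, j)} : Set (Sym2 (Fin k))) := by
        intro e' he' hm
        rw [Set.mem_singleton_iff] at hm
        exact hmem (hm ▸ he')
      have hreach0 : (T0.deleteEdges {s(i, j)}).Reachable (e s₁) (e s₂) :=
        ⟨p.val.toDeleteEdges _ hp⟩
      have hiff := reach_del_comap e (OG N) (e.symm i) (e.symm j) s₁ s₂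
      simp only [Equiv.apply_symm_apply] at hiff
      have hreach : ((OG N).deleteEdges {s(e.symm i, e.symm j)}).Reachable s₁ s₂ :=
        hiff.mp hreach0
      have hAs₁ : A ∈ s₁.val := ⟨hAN, hu⟩
      have hAs₂ : A ∉ s₂.val := fun hc => hw hc.2
      exact camp_sep h1 h2 h3 hE hAs₁ hAs₂ hreach
  -- fundamental cut computation
  have hside : ∀ (i j : Fin k) (A : Set V), EdgeAt N (e.symm i) (e.symm j) A →
      (⋃ t ∈ {t | (T0.deleteEdges {s(i, j)}).Reachable i t}, X0 t) = A := by
    intro i j A hE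
    have hAN : A ∈ N := (e.symm i).prop.1 hE.1
    ext v
    simp only [Set.mem_iUnion, Set.mem_setOf_eq, exists_prop]
    constructor
    · rintro ⟨t, ht, hv⟩
      have hiff := reach_del_comap e (OG N) (e.symm i) (e.symm j) (e.symm i) (e.symm t)
      simp only [Equiv.apply_symm_apply] at hiff
      have hreach := hiff.mp ht
      have hAt : A ∈ (e.symm t).val := by
        by_contra h
        exact camp_sep h1 h2 h3 hE hE.1 h hreach
      have hvt : (e.symm t).val = OvSet N v := hv
      rw [hvt] at hAt
      exact hAt.2
    · intro hvA
      refine ⟨e ⟨OvSet N v, consis_Ov h1 h2 h3 v⟩, ?_, ?_⟩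
      · have hreach : ((OG N).deleteEdges {s(e.symm i, e.symm j)}).Reachable (e.symm i)
            ⟨OvSet N v, consis_Ov h1 h2 h3 v⟩ := by
          apply reach_del h1 h2 h3 _ _ _ _ rfl
          intro P Q hm A' hP hQ
          rw [Set.mem_singleton_iff, Sym2.eq_iff] at hm
          rcases hm with ⟨hPe, hQe⟩ | ⟨hPe, hQe⟩
          · subst hPe; subst hQe
            by_cases h4 : A' = A
            · subst h4
              exact iff_of_true hE.1 ⟨hAN, hvA⟩
            · by_cases h5 : A' = Aᶜ
              · subst h5
                exact absurd hP hE.2.2.2.1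
              · exact absurd ((hE.2.2.2.2 A' h4 h5).mp hP) hQ
          · subst hPe; subst hQe
            by_cases h4 : A' = A
            · subst h4
              exact absurd hP hE.2.1
            · by_cases h5 : A' = Aᶜ
              · subst h5
                refine iff_of_false hE.2.2.2.1 ?_
                rintro ⟨-, hvc⟩
                exact hvc hvA
              · exact absurd ((hE.2.2.2.2 A' h4 h5).mpr hP) hQ
        have hiff := reach_del_comap e (OG N) (e.symm i) (e.symm j) (e.symm i)
          ⟨OvSet N v, consis_Ov h1 h2 h3 v⟩
        simp only [Equiv.apply_symm_apply] at hiff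
        exact hiff.mpr hreach
      · show (e.symm (e (⟨OvSet N v, consis_Ov h1 h2 h3 v⟩ : Tau N))).val = OvSet N v
        rw [Equiv.symm_apply_apply]
  have hcuts : {F | ∃ i j, T0.Adj i j ∧
      F = cutEdges G (⋃ t ∈ {t | (T0.deleteEdges {s(i, j)}).Reachable i t}, X0 t)}
      = {F | ∃ A ∈ M, F = cutEdges G A} := by
    ext F
    constructor
    · rintro ⟨i, j, hadj, rfl⟩
      obtain ⟨A, hE⟩ := (hadj : (OG N).Adj (e.symm i) (e.symm j))
      rw [hside i j A hE]
      have hAN : A ∈ N := (e.symm i).prop.1 hE.1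
      rcases hAN with hAM | hAcM
      · exact ⟨A, hAM, rfl⟩
      · exact ⟨Aᶜ, hAcM, (cutEdges_compl G A).symm⟩
    · rintro ⟨A, hAM, rfl⟩
      have hAN : A ∈ N := Or.inl hAM
      obtain ⟨hc, hAOA, hmin⟩ := exists_OA h1 h2 h3 hAN
      let t₁ : Tau N := ⟨OASet N A, hc⟩
      let t₂ : Tau N := ⟨flipSet (OASet N A) A, consis_flip h1 h2 h3 hc hAOA hmin⟩
      have hE : EdgeAt N t₁ t₂ A := flip_edgeAt h1 h2 h3 hc hAOA hmin
      have hE' : EdgeAt N (e.symm (e t₁)) (e.symm (e t₂)) A := by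
        rw [Equiv.symm_apply_apply, Equiv.symm_apply_apply]
        exact hE
      refine ⟨e t₁, e t₂, ⟨A, hE'⟩, ?_⟩
      rw [hside (e t₁) (e t₂) A hE']
  exact ⟨Fin k, inferInstance, T0, X0, ⟨hpre0⟩, hac0, hU, hD, hDen, hcuts⟩
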